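/- arXiv:2405.16644 — 4 statements merged into one kernel-verified Lean document; each statement's English description precedes it below -/
import Mathlib

section
/- Under the assumptions of the LSA setup, the following deterministic identity holds: √n · Ā(θ̄_n − θ*) = −W + D₁ − D₂ − D₃ + D₄, where W = n^{−1/2} Σ_{k=n+1}^{2n} ε_k, D₁ = n^{−1/2}(θ_n − θ*)/α_n, D₂ = n^{−1/2}(θ_{2n} − θ*)/α_{2n}, D₃ = n^{−1/2} Σ_{k=n+1}^{2n} (A_k − Ā)(θ_{k−1} − θ*), and D₄ = n^{−1/2} Σ_{k=n+1}^{2n} (θ_{k−1} − θ*)(1/α_k − 1/α_{k−1}). -/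
open MeasureTheory ProbabilityTheory Matrix Finset

noncomputable section

/-- Euclidean norm on `Fin d → ℝ`. -/
def vecNorm {d : ℕ} (x : Fin d → ℝ) : ℝ :=
  Real.sqrt (∑ i, x i ^ 2)

/-- Operator (spectral) norm of a matrix with respect to Euclidean norms. -/
def matOpNorm {d : ℕ} (B : Matrix (Fin d) (Fin d) ℝ) : ℝ :=
  sSup {r : ℝ | ∃ x : Fin d → ℝ, vecNorm x = 1 ∧ r = vecNorm (B.mulVec x)}

/-- `Q`-weighted vector norm `‖x‖_Q = √(xᵀ Q x)`. -/
def qVecNorm {d : ℕ} (Q : Matrix (Fin d) (Fin d) ℝ) (x : Fin d → ℝ) : ℝ :=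
  Real.sqrt (x ⬝ᵥ Q.mulVec x)

/-- Induced matrix `Q`-norm `‖B‖_Q = sup_{x ≠ 0} ‖Bx‖_Q / ‖x‖_Q`. -/
def qMatNorm {d : ℕ} (Q B : Matrix (Fin d) (Fin d) ℝ) : ℝ :=
  sSup {r : ℝ | ∃ x : Fin d → ℝ, x ≠ 0 ∧ r = qVecNorm Q (B.mulVec x) / qVecNorm Q x}

/-- Smallest eigenvalue, via the Rayleigh quotient characterization. -/
def lambdaMin {d : ℕ} (M : Matrix (Fin d) (Fin d) ℝ) : ℝ :=
  sInf {r : ℝ | ∃ x : Fin d → ℝ, vecNorm x = 1 ∧ r = x ⬝ᵥ M.mulVec x}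

/-- Largest eigenvalue, via the Rayleigh quotient characterization. -/
def lambdaMax {d : ℕ} (M : Matrix (Fin d) (Fin d) ℝ) : ℝ :=
  sSup {r : ℝ | ∃ x : Fin d → ℝ, vecNorm x = 1 ∧ r = x ⬝ᵥ M.mulVec x}

/-- `−A` is Hurwitz: every (complex) eigenvalue of `A` has positive real part. -/
def NegHurwitz {d : ℕ} (A : Matrix (Fin d) (Fin d) ℝ) : Prop :=
  ∀ μ : ℂ, (A.map (algebraMap ℝ ℂ)).charpoly.IsRoot μ → 0 < μ.re

/-- Ordered matrix product `F k * F (k-1) * ⋯ * F m` (factors with larger index on the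
left); equal to the identity matrix when `m > k`. -/
def matProd {d : ℕ} (m k : ℕ) (F : ℕ → Matrix (Fin d) (Fin d) ℝ) :
    Matrix (Fin d) (Fin d) ℝ :=
  ((List.range' m (k + 1 - m)).reverse.map F).prod


/-- Proposition: expansion of the Polyak–Ruppert error.
For the LSA iterates `θ_k = θ_{k−1} − α_k(A_k θ_{k−1} − b_k)` with `Āθ* = b̄` and
`ε_k = (A_k − Ā)θ* − (b_k − b̄)`, the deterministic identity
`√n·Ā(θ̄_n − θ*) = −W + D₁ − D₂ − D₃ + D₄` holds, where
`W = n^{−1/2} Σ_{k=n+1}^{2n} ε_k`, `D₁ = n^{−1/2}(θ_n − θ*)/α_n`,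
`D₂ = n^{−1/2}(θ_{2n} − θ*)/α_{2n}`,
`D₃ = n^{−1/2} Σ_{k=n+1}^{2n} (A_k − Ā)(θ_{k−1} − θ*)`, and
`D₄ = n^{−1/2} Σ_{k=n+1}^{2n} (θ_{k−1} − θ*)(1/α_k − 1/α_{k−1})`. -/
theorem stmt_1 {d n : ℕ} (hd : 0 < d) (hn : 0 < n)
    (A : ℕ → Matrix (Fin d) (Fin d) ℝ) (b : ℕ → Fin d → ℝ)
    (α : ℕ → ℝ) (hα : ∀ k, 0 < α k)
    (Abar : Matrix (Fin d) (Fin d) ℝ) (bbar : Fin d → ℝ)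
    (θstar : Fin d → ℝ) (hsol : Abar.mulVec θstar = bbar)
    (eps : ℕ → Fin d → ℝ)
    (heps : ∀ k, eps k = (A k - Abar).mulVec θstar - (b k - bbar))
    (θ0 : Fin d → ℝ) (θ : ℕ → Fin d → ℝ) (hθ0 : θ 0 = θ0)
    (hθrec : ∀ k : ℕ, θ (k + 1) = θ k - α (k + 1) • ((A (k + 1)).mulVec (θ k) - b (k + 1))) :
    Real.sqrt n • Abar.mulVec (((n : ℝ)⁻¹ • ∑ k ∈ Finset.Ico n (2 * n), θ k) - θstar)
      = - ((Real.sqrt n)⁻¹ • ∑ k ∈ Finset.Icc (n + 1) (2 * n), eps k)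
        + (Real.sqrt n)⁻¹ • (α n)⁻¹ • (θ n - θstar)
        - (Real.sqrt n)⁻¹ • (α (2 * n))⁻¹ • (θ (2 * n) - θstar)
        - (Real.sqrt n)⁻¹ •
            ∑ k ∈ Finset.Icc (n + 1) (2 * n), (A k - Abar).mulVec (θ (k - 1) - θstar)
        + (Real.sqrt n)⁻¹ •
            ∑ k ∈ Finset.Icc (n + 1) (2 * n),
              ((α k)⁻¹ - (α (k - 1))⁻¹) • (θ (k - 1) - θstar) := by
  classical
  have hsqrt : (0:ℝ) < Real.sqrt n := Real.sqrt_pos.2 (by exact_mod_cast hn)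
  have hsqrt' : Real.sqrt n ≠ 0 := ne_of_gt hsqrt
  have hmul : Real.sqrt n * Real.sqrt n = (n:ℝ) :=
    Real.mul_self_sqrt (by positivity)
  -- per-step identity
  have step : ∀ k : ℕ, Abar.mulVec (θ k - θstar)
      = (α (k+1))⁻¹ • (θ k - θ (k+1))
        - (A (k+1) - Abar).mulVec (θ k - θstar) - eps (k+1) := by
    intro k
    have h1 : θ k - θ (k+1) = α (k+1) • ((A (k+1)).mulVec (θ k) - b (k+1)) := by
      rw [hθrec k]; abel
    have h2 : (α (k+1))⁻¹ • (θ k - θ (k+1))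
        = (A (k+1)).mulVec (θ k) - b (k+1) := by
      rw [h1, smul_smul, inv_mul_cancel₀ (ne_of_gt (hα (k+1))), one_smul]
    rw [h2, heps]
    simp only [Matrix.sub_mulVec, Matrix.mulVec_sub, hsol]
    abel
  -- telescoping identity
  have tele : ∀ i : ℕ, (α (n+i+1))⁻¹ • (θ (n+i) - θ (n+i+1))
      = ((α (n+i))⁻¹ • (θ (n+i) - θstar) - (α (n+i+1))⁻¹ • (θ (n+i+1) - θstar))
        + ((α (n+i+1))⁻¹ - (α (n+i))⁻¹) • (θ (n+i) - θstar) := by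
    intro i
    module
  -- scalar facts
  have hs1 : Real.sqrt n * ((n:ℝ))⁻¹ = (Real.sqrt n)⁻¹ := by
    field_simp
    exact Real.sq_sqrt (by positivity)
  have hs2 : (Real.sqrt n)⁻¹ * (n:ℝ) = Real.sqrt n := by
    field_simp
    exact (Real.sq_sqrt (by positivity)).symm
  -- rewrite LHS
  have hcard : (Finset.Ico n (2*n)).card = n := by
    rw [Nat.card_Ico]; omega
  have hlhs : Real.sqrt n • Abar.mulVec (((n : ℝ)⁻¹ • ∑ k ∈ Finset.Ico n (2 * n), θ k) - θstar)
      = (Real.sqrt n)⁻¹ • Abar.mulVec (∑ k ∈ Finset.Ico n (2*n), (θ k - θstar)) := by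
    have e1 : (∑ k ∈ Finset.Ico n (2*n), (θ k - θstar))
        = (∑ k ∈ Finset.Ico n (2*n), θ k) - (n:ℝ) • θstar := by
      rw [Finset.sum_sub_distrib, Finset.sum_const, hcard]
      rw [Nat.cast_smul_eq_nsmul ℝ]
    rw [e1, Matrix.mulVec_sub, Matrix.mulVec_sub, Matrix.mulVec_smul, Matrix.mulVec_smul,
      smul_sub, smul_sub, smul_smul, smul_smul, hs1, hs2]
  rw [hlhs]
  -- factor out (√n)⁻¹ on the RHS
  rw [show ∀ (W D1 D2 D3 D4 : Fin d → ℝ),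
      -((Real.sqrt n)⁻¹ • W) + (Real.sqrt n)⁻¹ • D1 - (Real.sqrt n)⁻¹ • D2
        - (Real.sqrt n)⁻¹ • D3 + (Real.sqrt n)⁻¹ • D4
      = (Real.sqrt n)⁻¹ • (-W + D1 - D2 - D3 + D4) from fun W D1 D2 D3 D4 => by
        simp only [smul_add, smul_sub, smul_neg]]
  congr 1
  -- convert Icc sums and Ico sum to range sums
  have hIcc : Finset.Icc (n+1) (2*n) = Finset.Ico (n+1) (2*n+1) := by
    rw [Finset.Ico_add_one_right_eq_Icc]
  have hn1 : 2*n + 1 - (n+1) = n := by omega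
  have hn2 : 2*n - n = n := by omega
  have hsub : ∀ i : ℕ, n + 1 + i - 1 = n + i := fun i => by omega
  rw [hIcc]
  rw [Finset.sum_Ico_eq_sum_range, Finset.sum_Ico_eq_sum_range, Finset.sum_Ico_eq_sum_range,
    Finset.sum_Ico_eq_sum_range, hn1, hn2]
  simp only [hsub]
  have hmv : Abar.mulVec (∑ i ∈ Finset.range n, (θ (n+i) - θstar))
      = ∑ i ∈ Finset.range n, Abar.mulVec (θ (n+i) - θstar) := by
    simp only [← Matrix.mulVecLin_apply, map_sum]
  rw [hmv]
  have hstep : ∀ i ∈ Finset.range n, Abar.mulVec (θ (n+i) - θstar)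
      = ((α (n+i))⁻¹ • (θ (n+i) - θstar) - (α (n+i+1))⁻¹ • (θ (n+i+1) - θstar))
        + ((α (n+i+1))⁻¹ - (α (n+i))⁻¹) • (θ (n+i) - θstar)
        - (A (n+i+1) - Abar).mulVec (θ (n+i) - θstar) - eps (n+i+1) := by
    intro i _
    rw [step (n+i), tele i]
  rw [Finset.sum_congr rfl hstep]
  have hT : ∑ i ∈ Finset.range n,
      ((α (n+i))⁻¹ • (θ (n+i) - θstar) - (α (n+i+1))⁻¹ • (θ (n+i+1) - θstar))
      = (α n)⁻¹ • (θ n - θstar) - (α (n+n))⁻¹ • (θ (n+n) - θstar) := by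
    have := Finset.sum_range_sub' (fun i => (α (n+i))⁻¹ • (θ (n+i) - θstar)) n
    simpa [add_assoc] using this
  simp only [Finset.sum_add_distrib, Finset.sum_sub_distrib, hT]
  have h2n : n + n = 2 * n := by ring
  have hadd : ∀ i : ℕ, n + 1 + i = n + i + 1 := fun i => by omega
  simp only [h2n, hadd]
  abel


end
end

section
/- Let γ ∈ (0,1), and let (φ, φ′, r) be a random triple where φ, φ′ are random vectors in ℝ^d with ‖φ‖ ≤ 1 and ‖φ′‖ ≤ 1 almost surely, φ and φ′ have the same distribution, and r is a random variable with values in [0,1]. Set A = φ(φ − γφ′)ᵀ, b = φ·r, Ā = E[A], b̄ = E[b], and Σ_φ = E[φφᵀ], assumed positive definite with smallest eigenvalue λ_min(Σ_φ) > 0; let θ* solve Āθ* = b̄. Then: (i) almost surely max(‖A‖, ‖A − Ā‖) ≤ 2(1+γ) and ‖(A − Ā)θ* − (b − b̄)‖ ≤ 2(1+γ)(‖θ*‖ + 1); (ii) for every α ∈ [0, (1−γ)/(1+γ)²], ‖I − αĀ‖² ≤ 1 − α(1−γ)λ_min(Σ_φ). -/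
open MeasureTheory ProbabilityTheory Matrix Finset

noncomputable section

lemma vecNorm_nonneg {d : ℕ} (x : Fin d → ℝ) : 0 ≤ vecNorm x := Real.sqrt_nonneg _

lemma vecNorm_sq {d : ℕ} (x : Fin d → ℝ) : vecNorm x ^ 2 = ∑ i, x i ^ 2 :=
  Real.sq_sqrt (Finset.sum_nonneg fun i _ => sq_nonneg _)

lemma dot_self_eq {d : ℕ} (x : Fin d → ℝ) : x ⬝ᵥ x = ∑ i, x i ^ 2 := by
  simp [dotProduct, sq]

lemma vecNorm_sq' {d : ℕ} (x : Fin d → ℝ) : vecNorm x ^ 2 = x ⬝ᵥ x := by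
  rw [vecNorm_sq, dot_self_eq]

lemma abs_dot_le {d : ℕ} (x y : Fin d → ℝ) : |x ⬝ᵥ y| ≤ vecNorm x * vecNorm y := by
  have h := Finset.sum_mul_sq_le_sq_mul_sq Finset.univ x y
  have h2 : (x ⬝ᵥ y) ^ 2 ≤ (vecNorm x * vecNorm y) ^ 2 := by
    rw [mul_pow, vecNorm_sq, vecNorm_sq]; simpa [dotProduct] using h
  exact abs_le_of_sq_le_sq h2 (mul_nonneg (vecNorm_nonneg _) (vecNorm_nonneg _))

lemma dot_le {d : ℕ} (x y : Fin d → ℝ) : x ⬝ᵥ y ≤ vecNorm x * vecNorm y :=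
  (le_abs_self _).trans (abs_dot_le x y)

lemma vecNorm_smul {d : ℕ} (c : ℝ) (x : Fin d → ℝ) : vecNorm (c • x) = |c| * vecNorm x := by
  unfold vecNorm
  rw [← Real.sqrt_sq_eq_abs, ← Real.sqrt_mul (sq_nonneg c), Finset.mul_sum]
  congr 1; funext; congr 1 with i; simp [mul_pow]

lemma vecNorm_le_of_dual {d : ℕ} {v : Fin d → ℝ} {c : ℝ} (hc : 0 ≤ c)
    (h : ∀ y : Fin d → ℝ, vecNorm y = 1 → y ⬝ᵥ v ≤ c) : vecNorm v ≤ c := by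
  rcases eq_or_ne (vecNorm v) 0 with h0 | h0
  · rw [h0]; exact hc
  · have hpos : 0 < vecNorm v := lt_of_le_of_ne (vecNorm_nonneg v) (Ne.symm h0)
    have hy : vecNorm ((vecNorm v)⁻¹ • v) = 1 := by
      rw [vecNorm_smul, abs_of_pos (inv_pos.mpr hpos), inv_mul_cancel₀ h0]
    have := h _ hy
    rw [smul_dotProduct, smul_eq_mul, ← vecNorm_sq' v] at this
    calc vecNorm v = (vecNorm v)⁻¹ * vecNorm v ^ 2 := by field_simp [sq]
    _ ≤ c := this

lemma vecNorm_sub_le {d : ℕ} (u v : Fin d → ℝ) :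
    vecNorm (u - v) ≤ vecNorm u + vecNorm v := by
  refine vecNorm_le_of_dual (add_nonneg (vecNorm_nonneg _) (vecNorm_nonneg _)) fun y hy => ?_
  rw [dotProduct_sub]
  have h1 := (dot_le y u).trans_eq (by rw [hy, one_mul])
  have h2 := (abs_dot_le y v).trans_eq (by rw [hy, one_mul])
  have := neg_le_of_abs_le h2
  linarith

lemma abs_apply_le {d : ℕ} (x : Fin d → ℝ) (i : Fin d) : |x i| ≤ vecNorm x := by
  rw [← Real.sqrt_sq_eq_abs]
  exact Real.sqrt_le_sqrt (Finset.single_le_sum (f := fun j => x j ^ 2)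
    (fun j _ => sq_nonneg _) (Finset.mem_univ i))

lemma matOpNorm_le {d : ℕ} {B : Matrix (Fin d) (Fin d) ℝ} {c : ℝ} (hc : 0 ≤ c)
    (h : ∀ x : Fin d → ℝ, vecNorm x = 1 → vecNorm (B.mulVec x) ≤ c) : matOpNorm B ≤ c := by
  refine Real.sSup_le (fun r hr => ?_) hc
  obtain ⟨x, hx, rfl⟩ := hr
  exact h x hx

lemma matOpNorm_nonneg {d : ℕ} (B : Matrix (Fin d) (Fin d) ℝ) : 0 ≤ matOpNorm B :=
  Real.sSup_nonneg (fun r hr => by obtain ⟨x, _, rfl⟩ := hr; exact vecNorm_nonneg _)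

section integrals
variable {Om : Type} [MeasurableSpace Om] {Pr : Measure Om} [IsProbabilityMeasure Pr]

lemma integrable_of_bdd {f : Om → ℝ} (hm : Measurable f) {C : ℝ} (h : ∀ᵐ ω ∂Pr, |f ω| ≤ C) :
    Integrable f Pr :=
  Integrable.mono' (integrable_const C) hm.aestronglyMeasurable
    (h.mono fun ω hω => by simpa [Real.norm_eq_abs] using hω)

lemma integral_le_of_ae_le {f : Om → ℝ} (hf : Integrable f Pr) {C : ℝ}
    (h : ∀ᵐ ω ∂Pr, f ω ≤ C) : ∫ ω, f ω ∂Pr ≤ C := by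
  calc ∫ ω, f ω ∂Pr ≤ ∫ _, C ∂Pr := integral_mono_ae hf (integrable_const C) h
  _ = C := by simp

lemma integral_CS {f g : Om → ℝ} (hf : Measurable f) (hg : Measurable g) {Cf Cg : ℝ}
    (hbf : ∀ᵐ ω ∂Pr, |f ω| ≤ Cf) (hbg : ∀ᵐ ω ∂Pr, |g ω| ≤ Cg) :
    |∫ ω, f ω * g ω ∂Pr| ≤
      Real.sqrt (∫ ω, f ω ^ 2 ∂Pr) * Real.sqrt (∫ ω, g ω ^ 2 ∂Pr) := by
  have hif2 : Integrable (fun ω => f ω ^ 2) Pr := by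
    refine integrable_of_bdd (hf.pow_const 2) (C := Cf ^ 2) (hbf.mono fun ω hω => ?_)
    rw [abs_pow]; exact pow_le_pow_left₀ (abs_nonneg _) hω 2
  have hig2 : Integrable (fun ω => g ω ^ 2) Pr := by
    refine integrable_of_bdd (hg.pow_const 2) (C := Cg ^ 2) (hbg.mono fun ω hω => ?_)
    rw [abs_pow]; exact pow_le_pow_left₀ (abs_nonneg _) hω 2
  have hifg : Integrable (fun ω => f ω * g ω) Pr := by
    refine integrable_of_bdd (hf.mul hg) (C := Cf * Cg) ((hbf.and hbg).mono fun ω hω => ?_)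
    rw [abs_mul]
    exact mul_le_mul hω.1 hω.2 (abs_nonneg _) ((abs_nonneg _).trans hω.1)
  set a := ∫ ω, f ω ^ 2 ∂Pr with ha
  set b := ∫ ω, g ω ^ 2 ∂Pr with hb
  set c := ∫ ω, f ω * g ω ∂Pr with hc
  have ha0 : 0 ≤ a := integral_nonneg fun ω => sq_nonneg _
  have hb0 : 0 ≤ b := integral_nonneg fun ω => sq_nonneg _
  rcases eq_or_lt_of_le hb0 with hbz | hbpos
  · have hg0 : (fun ω => g ω ^ 2) =ᵐ[Pr] 0 :=
      (integral_eq_zero_iff_of_nonneg_ae (Filter.Eventually.of_forall fun ω => sq_nonneg _)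
        hig2).mp hbz.symm
    have hc0 : c = 0 := by
      rw [hc, ← integral_zero Om ℝ (μ := Pr)]
      refine integral_congr_ae (hg0.mono fun ω hω => ?_)
      have : g ω = 0 := by
        have := hω
        simp only [Pi.zero_apply] at this ⊢
        exact (pow_eq_zero_iff two_ne_zero).mp this
      simp [this]
    rw [hc0, abs_zero]
    positivity
  · have hkey : 0 ≤ ∫ ω, (b * f ω - c * g ω) ^ 2 ∂Pr :=
      integral_nonneg fun ω => sq_nonneg _
    have hexp : ∫ ω, (b * f ω - c * g ω) ^ 2 ∂Pr = b ^ 2 * a - 2 * (b * c) * c + c ^ 2 * b := by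
      have : ∀ ω, (b * f ω - c * g ω) ^ 2
          = b ^ 2 * f ω ^ 2 - 2 * (b * c) * (f ω * g ω) + c ^ 2 * g ω ^ 2 := fun ω => by ring
      simp_rw [this]
      have h1 : Integrable (fun ω => b ^ 2 * f ω ^ 2 - 2 * (b * c) * (f ω * g ω)) Pr :=
        (hif2.const_mul _).sub (hifg.const_mul _)
      have h2 : Integrable (fun ω => c ^ 2 * g ω ^ 2) Pr := hig2.const_mul _
      have h3 : Integrable (fun ω => b ^ 2 * f ω ^ 2) Pr := hif2.const_mul _
      have h4 : Integrable (fun ω => 2 * (b * c) * (f ω * g ω)) Pr := hifg.const_mul _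
      rw [integral_add h1 h2, integral_sub h3 h4,
        integral_const_mul, integral_const_mul, integral_const_mul]
    have hq : c ^ 2 ≤ a * b := by nlinarith [hkey, hexp]
    calc |c| = Real.sqrt (c ^ 2) := (Real.sqrt_sq_eq_abs c).symm
    _ ≤ Real.sqrt (a * b) := Real.sqrt_le_sqrt hq
    _ = Real.sqrt a * Real.sqrt b := Real.sqrt_mul ha0 _

end integrals

lemma sum_sum_eq {d : ℕ} (y x φv φv' : Fin d → ℝ) (γ : ℝ) :
    ∑ i, ∑ j, (y i * x j) * (φv i * (φv j - γ * φv' j))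
      = (y ⬝ᵥ φv) * ((x ⬝ᵥ φv) - γ * (x ⬝ᵥ φv')) := by
  simp only [dotProduct]
  have h : (∑ j, x j * φv j) - γ * ∑ j, x j * φv' j
      = ∑ j, (x j * φv j - γ * (x j * φv' j)) := by
    rw [Finset.mul_sum, ← Finset.sum_sub_distrib]
  rw [h, Finset.sum_mul_sum]
  exact Finset.sum_congr rfl fun i _ => Finset.sum_congr rfl fun j _ => by ring

lemma dot_matrix_integral {d : ℕ} {Om : Type} [MeasurableSpace Om] {Pr : Measure Om}
    (M : Matrix (Fin d) (Fin d) ℝ) (F : Om → Fin d → Fin d → ℝ)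
    (hM : ∀ i j, M i j = ∫ ω, F ω i j ∂Pr)
    (hFi : ∀ i j, Integrable (fun ω => F ω i j) Pr) (x y : Fin d → ℝ) :
    y ⬝ᵥ M.mulVec x = ∫ ω, ∑ i, ∑ j, (y i * x j) * F ω i j ∂Pr := by
  have step1 : y ⬝ᵥ M.mulVec x = ∑ i, ∑ j, (y i * x j) * M i j := by
    simp only [dotProduct, mulVec, Finset.mul_sum]
    exact Finset.sum_congr rfl fun i _ => Finset.sum_congr rfl fun j _ => by ring
  rw [step1]
  have step2 : ∀ i j, (y i * x j) * M i j = ∫ ω, (y i * x j) * F ω i j ∂Pr := fun i j => by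
    rw [hM i j, integral_const_mul]
  simp_rw [step2]
  rw [integral_finset_sum _ (fun i _ => integrable_finset_sum _ fun j _ => (hFi i j).const_mul _)]
  exact Finset.sum_congr rfl fun i _ =>
    (integral_finset_sum _ fun j _ => (hFi i j).const_mul _).symm

lemma dot_vec_integral {d : ℕ} {Om : Type} [MeasurableSpace Om] {Pr : Measure Om}
    (bb : Fin d → ℝ) (g : Om → Fin d → ℝ)
    (hb : ∀ i, bb i = ∫ ω, g ω i ∂Pr)
    (hgi : ∀ i, Integrable (fun ω => g ω i) Pr) (y : Fin d → ℝ) :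
    y ⬝ᵥ bb = ∫ ω, ∑ i, y i * g ω i ∂Pr := by
  have : ∀ i, y i * bb i = ∫ ω, y i * g ω i ∂Pr := fun i => by
    rw [hb i, integral_const_mul]
  simp only [dotProduct]
  simp_rw [this]
  exact (integral_finset_sum _ fun i _ => (hgi i).const_mul _).symm

lemma sum_sum_eq' {d : ℕ} (y x φv : Fin d → ℝ) :
    ∑ i, ∑ j, (y i * x j) * (φv i * φv j) = (y ⬝ᵥ φv) * (x ⬝ᵥ φv) := by
  have h := sum_sum_eq y x φv φv 0
  simpa using h

lemma mul_comb_le {γ A B u v w : ℝ} (hγ : 0 ≤ γ) (hA : 0 ≤ A)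
    (hu : |u| ≤ A) (hv : |v| ≤ B) (hw : |w| ≤ B) :
    u * (v - γ * w) ≤ A * ((1 + γ) * B) := by
  have h3 : |γ * w| ≤ γ * B := by
    rw [abs_mul, abs_of_nonneg hγ]
    exact mul_le_mul_of_nonneg_left hw hγ
  have h4 := abs_sub v (γ * w)
  have h2 : |v - γ * w| ≤ (1 + γ) * B := by nlinarith
  have h1 : |u * (v - γ * w)| ≤ A * ((1 + γ) * B) := by
    rw [abs_mul]
    exact mul_le_mul hu h2 (abs_nonneg _) hA
  exact (le_abs_self _).trans h1

lemma vecNorm_eq_sqrt_dot {d : ℕ} (x : Fin d → ℝ) : vecNorm x = Real.sqrt (x ⬝ᵥ x) := by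
  rw [vecNorm, dot_self_eq]

set_option maxHeartbeats 2000000 in
/-- Proposition: TD learning with linear function approximation
satisfies the LSA assumptions.  With `A = φ(φ − γφ′)ᵀ`, `b = rφ`, features bounded by
one, `φ` and `φ′` identically distributed and rewards in `[0,1]`:
(i) almost surely `max(‖A‖, ‖A − Ā‖) ≤ 2(1+γ)` and
`‖(A − Ā)θ* − (b − b̄)‖ ≤ 2(1+γ)(‖θ*‖ + 1)`;
(ii) for every `α ∈ [0, (1−γ)/(1+γ)²]`, `‖I − αĀ‖² ≤ 1 − α(1−γ)λ_min(Σ_φ)`. -/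
theorem stmt_16 {d : ℕ} (γ : ℝ) (hγ : γ ∈ Set.Ioo (0 : ℝ) 1)
    {Om : Type} [MeasurableSpace Om]
    (Pr : Measure Om) [IsProbabilityMeasure Pr]
    (φ φ' : Om → Fin d → ℝ) (r : Om → ℝ)
    (hφmeas : Measurable φ) (hφ'meas : Measurable φ') (hrmeas : Measurable r)
    (hφbound : ∀ᵐ ω ∂Pr, vecNorm (φ ω) ≤ 1)
    (hφ'bound : ∀ᵐ ω ∂Pr, vecNorm (φ' ω) ≤ 1)
    (hsame : Measure.map φ Pr = Measure.map φ' Pr)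
    (hr : ∀ᵐ ω ∂Pr, r ω ∈ Set.Icc (0 : ℝ) 1)
    (Abar : Matrix (Fin d) (Fin d) ℝ)
    (hAbar : ∀ i j, Abar i j = ∫ ω, φ ω i * (φ ω j - γ * φ' ω j) ∂Pr)
    (bbar : Fin d → ℝ)
    (hbbar : ∀ i, bbar i = ∫ ω, φ ω i * r ω ∂Pr)
    (Sigφ : Matrix (Fin d) (Fin d) ℝ)
    (hSigφ : ∀ i j, Sigφ i j = ∫ ω, φ ω i * φ ω j ∂Pr)
    (hSigφpos : Sigφ.PosDef) (hSigφmin : 0 < lambdaMin Sigφ)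
    (θstar : Fin d → ℝ) (hθstar : Abar.mulVec θstar = bbar) :
    (∀ᵐ ω ∂Pr,
      max (matOpNorm (Matrix.of fun i j => φ ω i * (φ ω j - γ * φ' ω j)))
          (matOpNorm ((Matrix.of fun i j => φ ω i * (φ ω j - γ * φ' ω j)) - Abar))
        ≤ 2 * (1 + γ)
      ∧ vecNorm (((Matrix.of fun i j => φ ω i * (φ ω j - γ * φ' ω j)) - Abar).mulVec θstar
            - (r ω • φ ω - bbar))
        ≤ 2 * (1 + γ) * (vecNorm θstar + 1))
    ∧ (∀ α : ℝ, α ∈ Set.Icc (0 : ℝ) ((1 - γ) / (1 + γ) ^ 2) →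
        (matOpNorm (1 - α • Abar)) ^ 2 ≤ 1 - α * (1 - γ) * lambdaMin Sigφ) := by
  obtain ⟨hγ0, hγ1⟩ := hγ
  have h1γ : (0:ℝ) ≤ 1 + γ := by linarith
  -- coordinate bounds
  have hφc : ∀ᵐ ω ∂Pr, ∀ i, |φ ω i| ≤ 1 :=
    hφbound.mono fun ω h i => (abs_apply_le _ i).trans h
  have hφ'c : ∀ᵐ ω ∂Pr, ∀ i, |φ' ω i| ≤ 1 :=
    hφ'bound.mono fun ω h i => (abs_apply_le _ i).trans h
  -- component measurability
  have hφi : ∀ i, Measurable fun ω => φ ω i := fun i => (measurable_pi_apply i).comp hφmeas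
  have hφ'i : ∀ i, Measurable fun ω => φ' ω i := fun i => (measurable_pi_apply i).comp hφ'meas
  -- integrability of matrix entries
  have hFint : ∀ i j, Integrable (fun ω => φ ω i * (φ ω j - γ * φ' ω j)) Pr := by
    intro i j
    refine integrable_of_bdd ((hφi i).mul ((hφi j).sub ((hφ'i j).const_mul γ)))
      (C := 1 + γ) (((hφc.and hφ'c)).mono fun ω hω => ?_)
    obtain ⟨h1, h2⟩ := hω
    have h3 : |γ * φ' ω j| ≤ γ * 1 := by
      rw [abs_mul, abs_of_nonneg hγ0.le]
      exact mul_le_mul_of_nonneg_left (h2 j) hγ0.le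
    have h4 := abs_sub (φ ω j) (γ * φ' ω j)
    rw [abs_mul]
    nlinarith [abs_nonneg (φ ω i), abs_nonneg (φ ω j - γ * φ' ω j), h1 i, h1 j]
  have hSint : ∀ i j, Integrable (fun ω => φ ω i * φ ω j) Pr := by
    intro i j
    refine integrable_of_bdd ((hφi i).mul (hφi j)) (C := 1) (hφc.mono fun ω h1 => ?_)
    rw [abs_mul]
    nlinarith [abs_nonneg (φ ω i), h1 i, h1 j]
  have hbint : ∀ i, Integrable (fun ω => φ ω i * r ω) Pr := by
    intro i
    refine integrable_of_bdd ((hφi i).mul hrmeas) (C := 1) ((hφc.and hr).mono fun ω hω => ?_)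
    obtain ⟨h1, h2⟩ := hω
    rw [abs_mul]
    have : |r ω| ≤ 1 := abs_le.mpr ⟨by linarith [h2.1], h2.2⟩
    nlinarith [abs_nonneg (φ ω i), h1 i]
  -- dot products: measurability and bounds
  have hdotm : ∀ x : Fin d → ℝ, Measurable fun ω => x ⬝ᵥ φ ω := fun x => by
    simp only [dotProduct]
    exact Finset.measurable_sum _ fun i _ => measurable_const.mul (hφi i)
  have hdot'm : ∀ x : Fin d → ℝ, Measurable fun ω => x ⬝ᵥ φ' ω := fun x => by
    simp only [dotProduct]
    exact Finset.measurable_sum _ fun i _ => measurable_const.mul (hφ'i i)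
  have hdotb : ∀ x : Fin d → ℝ, ∀ᵐ ω ∂Pr, |x ⬝ᵥ φ ω| ≤ vecNorm x := fun x =>
    hφbound.mono fun ω h => (abs_dot_le x (φ ω)).trans
      (mul_le_of_le_one_right (vecNorm_nonneg x) h)
  have hdot'b : ∀ x : Fin d → ℝ, ∀ᵐ ω ∂Pr, |x ⬝ᵥ φ' ω| ≤ vecNorm x := fun x =>
    hφ'bound.mono fun ω h => (abs_dot_le x (φ' ω)).trans
      (mul_le_of_le_one_right (vecNorm_nonneg x) h)
  -- key integral identities
  have keyA : ∀ x y : Fin d → ℝ, y ⬝ᵥ Abar.mulVec x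
      = ∫ ω, (y ⬝ᵥ φ ω) * ((x ⬝ᵥ φ ω) - γ * (x ⬝ᵥ φ' ω)) ∂Pr := by
    intro x y
    rw [dot_matrix_integral Abar (fun ω i j => φ ω i * (φ ω j - γ * φ' ω j)) hAbar hFint x y]
    exact integral_congr_ae (Filter.Eventually.of_forall fun ω => sum_sum_eq y x (φ ω) (φ' ω) γ)
  have keyS : ∀ x y : Fin d → ℝ, y ⬝ᵥ Sigφ.mulVec x
      = ∫ ω, (y ⬝ᵥ φ ω) * (x ⬝ᵥ φ ω) ∂Pr := by
    intro x y
    rw [dot_matrix_integral Sigφ (fun ω i j => φ ω i * φ ω j) hSigφ hSint x y]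
    exact integral_congr_ae (Filter.Eventually.of_forall fun ω => sum_sum_eq' y x (φ ω))
  have keyb : ∀ y : Fin d → ℝ, y ⬝ᵥ bbar = ∫ ω, (y ⬝ᵥ φ ω) * r ω ∂Pr := by
    intro y
    rw [dot_vec_integral bbar (fun ω i => φ ω i * r ω) hbbar hbint y]
    refine integral_congr_ae (Filter.Eventually.of_forall fun ω => ?_)
    simp only [dotProduct, Finset.sum_mul]
    exact Finset.sum_congr rfl fun i _ => by ring
  -- identical distribution
  have hsame' : ∀ x : Fin d → ℝ,
      ∫ ω, (x ⬝ᵥ φ' ω) ^ 2 ∂Pr = ∫ ω, (x ⬝ᵥ φ ω) ^ 2 ∂Pr := by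
    intro x
    have hdm : Measurable fun w : Fin d → ℝ => x ⬝ᵥ w := by
      simp only [dotProduct]
      exact Finset.measurable_sum _ fun i _ => measurable_const.mul (measurable_pi_apply i)
    have hG : Measurable fun w : Fin d → ℝ => (x ⬝ᵥ w) ^ 2 := hdm.pow_const 2
    rw [← integral_map hφ'meas.aemeasurable hG.aestronglyMeasurable, ← hsame,
      integral_map hφmeas.aemeasurable hG.aestronglyMeasurable]
  -- deterministic bounds
  have hAbarVec : ∀ x : Fin d → ℝ, vecNorm (Abar.mulVec x) ≤ (1 + γ) * vecNorm x := by
    intro x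
    refine vecNorm_le_of_dual (mul_nonneg h1γ (vecNorm_nonneg x)) fun y hy => ?_
    rw [keyA x y]
    have hint : Integrable (fun ω => (y ⬝ᵥ φ ω) * ((x ⬝ᵥ φ ω) - γ * (x ⬝ᵥ φ' ω))) Pr := by
      refine integrable_of_bdd ((hdotm y).mul (((hdotm x)).sub ((hdot'm x).const_mul γ)))
        (C := 1 * ((1 + γ) * vecNorm x))
        (((hdotb y).and ((hdotb x).and (hdot'b x))).mono fun ω hω => ?_)
      obtain ⟨h1, h2, h3⟩ := hω
      rw [hy] at h1
      have h4 : |γ * (x ⬝ᵥ φ' ω)| ≤ γ * vecNorm x := by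
        rw [abs_mul, abs_of_nonneg hγ0.le]
        exact mul_le_mul_of_nonneg_left h3 hγ0.le
      have h5 := abs_sub (x ⬝ᵥ φ ω) (γ * (x ⬝ᵥ φ' ω))
      rw [abs_mul]
      nlinarith [abs_nonneg (y ⬝ᵥ φ ω), abs_nonneg ((x ⬝ᵥ φ ω) - γ * (x ⬝ᵥ φ' ω))]
    have := integral_le_of_ae_le hint (C := 1 * ((1 + γ) * vecNorm x))
      (((hdotb y).and ((hdotb x).and (hdot'b x))).mono fun ω hω => by
        obtain ⟨h1, h2, h3⟩ := hω
        rw [hy] at h1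
        exact mul_comb_le hγ0.le zero_le_one h1 h2 h3)
    linarith [this]
  have hbbarN : vecNorm bbar ≤ 1 := by
    refine vecNorm_le_of_dual zero_le_one fun y hy => ?_
    rw [keyb y]
    have hint : Integrable (fun ω => (y ⬝ᵥ φ ω) * r ω) Pr := by
      refine integrable_of_bdd ((hdotm y).mul hrmeas) (C := 1)
        (((hdotb y).and hr).mono fun ω hω => ?_)
      obtain ⟨h1, h2⟩ := hω
      rw [hy] at h1
      rw [abs_mul]
      have : |r ω| ≤ 1 := abs_le.mpr ⟨by linarith [h2.1], h2.2⟩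
      nlinarith [abs_nonneg (y ⬝ᵥ φ ω)]
    refine integral_le_of_ae_le hint (((hdotb y).and hr).mono fun ω hω => ?_)
    obtain ⟨h1, h2⟩ := hω
    rw [hy] at h1
    nlinarith [abs_nonneg (y ⬝ᵥ φ ω), le_abs_self ((y ⬝ᵥ φ ω)), neg_abs_le ((y ⬝ᵥ φ ω)), h2.1, h2.2]
  constructor
  · filter_upwards [hφbound, hφ'bound, hr] with ω h1 h2 h3
    set Aω : Matrix (Fin d) (Fin d) ℝ := Matrix.of fun i j => φ ω i * (φ ω j - γ * φ' ω j)
      with hAω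
    have hAeq : ∀ x : Fin d → ℝ,
        Aω.mulVec x = ((φ ω - γ • φ' ω) ⬝ᵥ x) • φ ω := by
      intro x
      funext i
      simp only [hAω, mulVec, dotProduct, Matrix.of_apply, Pi.smul_apply, smul_eq_mul,
        Pi.sub_apply]
      rw [Finset.sum_mul]
      exact Finset.sum_congr rfl fun j _ => by ring
    have hsubN : vecNorm (φ ω - γ • φ' ω) ≤ 1 + γ := by
      refine (vecNorm_sub_le _ _).trans ?_
      rw [vecNorm_smul, abs_of_nonneg hγ0.le]
      nlinarith [vecNorm_nonneg (φ' ω)]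
    have hAx : ∀ x : Fin d → ℝ, vecNorm (Aω.mulVec x) ≤ (1 + γ) * vecNorm x := by
      intro x
      rw [hAeq x, vecNorm_smul]
      calc |(φ ω - γ • φ' ω) ⬝ᵥ x| * vecNorm (φ ω)
          ≤ |(φ ω - γ • φ' ω) ⬝ᵥ x| * 1 :=
            mul_le_mul_of_nonneg_left h1 (abs_nonneg _)
      _ = |(φ ω - γ • φ' ω) ⬝ᵥ x| := mul_one _
      _ ≤ vecNorm (φ ω - γ • φ' ω) * vecNorm x := abs_dot_le _ _
      _ ≤ (1 + γ) * vecNorm x := mul_le_mul_of_nonneg_right hsubN (vecNorm_nonneg x)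
    constructor
    · apply max_le
      · refine matOpNorm_le (by linarith) fun x hx => ?_
        calc vecNorm (Aω.mulVec x) ≤ (1 + γ) * vecNorm x := hAx x
        _ = 1 + γ := by rw [hx, mul_one]
        _ ≤ 2 * (1 + γ) := by linarith
      · refine matOpNorm_le (by linarith) fun x hx => ?_
        rw [Matrix.sub_mulVec]
        refine (vecNorm_sub_le _ _).trans ?_
        have ha := hAx x
        have hb := hAbarVec x
        rw [hx, mul_one] at ha hb
        linarith
    · rw [Matrix.sub_mulVec]
      have hT := vecNorm_nonneg θstar
      have e1 : vecNorm (Aω.mulVec θstar - Abar.mulVec θstar - (r ω • φ ω - bbar))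
          ≤ vecNorm (Aω.mulVec θstar - Abar.mulVec θstar) + vecNorm (r ω • φ ω - bbar) :=
        vecNorm_sub_le _ _
      have e2 : vecNorm (Aω.mulVec θstar - Abar.mulVec θstar)
          ≤ (1 + γ) * vecNorm θstar + (1 + γ) * vecNorm θstar :=
        (vecNorm_sub_le _ _).trans (add_le_add (hAx θstar) (hAbarVec θstar))
      have e3 : vecNorm (r ω • φ ω - bbar) ≤ 1 + 1 := by
        refine (vecNorm_sub_le _ _).trans (add_le_add ?_ hbbarN)
        rw [vecNorm_smul, abs_of_nonneg h3.1]
        nlinarith [vecNorm_nonneg (φ ω), h3.2]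
      calc vecNorm (Aω.mulVec θstar - Abar.mulVec θstar - (r ω • φ ω - bbar))
          ≤ (1 + γ) * vecNorm θstar + (1 + γ) * vecNorm θstar + (1 + 1) := by linarith
      _ ≤ 2 * (1 + γ) * (vecNorm θstar + 1) := by nlinarith
  · intro α hα
    obtain ⟨hα0, hαu⟩ := hα
    have hα2 : α * (1 + γ) ^ 2 ≤ 1 - γ := by
      rw [div_eq_mul_inv] at hαu
      have hpos : (0:ℝ) < (1 + γ) ^ 2 := by positivity
      calc α * (1 + γ) ^ 2 ≤ (1 - γ) * ((1 + γ) ^ 2)⁻¹ * (1 + γ) ^ 2 :=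
        mul_le_mul_of_nonneg_right hαu hpos.le
      _ = 1 - γ := by field_simp
    -- the Rayleigh set of Sigφ
    set S : Set ℝ := {t : ℝ | ∃ x : Fin d → ℝ, vecNorm x = 1 ∧ t = x ⬝ᵥ Sigφ.mulVec x} with hS
    have hSel : ∀ t ∈ S, 0 ≤ t := by
      rintro t ⟨x, hx, rfl⟩
      rw [keyS x x]
      exact integral_nonneg fun ω => mul_self_nonneg _
    have hbdd : BddBelow S := ⟨0, hSel⟩
    have hlmin_le : ∀ x : Fin d → ℝ, vecNorm x = 1 →
        lambdaMin Sigφ ≤ x ⬝ᵥ Sigφ.mulVec x := fun x hx => csInf_le hbdd ⟨x, hx, rfl⟩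
    -- d ≠ 0
    have hd : d ≠ 0 := by
      intro h
      subst h
      have hempty : S = ∅ := by
        rw [Set.eq_empty_iff_forall_notMem]
        rintro t ⟨x, hx, -⟩
        have : vecNorm x = 0 := by unfold vecNorm; simp
        rw [this] at hx
        norm_num at hx
      have : lambdaMin Sigφ = 0 := by
        unfold lambdaMin
        rw [show {t : ℝ | ∃ x : Fin 0 → ℝ, vecNorm x = 1 ∧ t = x ⬝ᵥ Sigφ.mulVec x} = ∅ from hempty]
        exact Real.sInf_empty
      rw [this] at hSigφmin
      exact lt_irrefl 0 hSigφmin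
    -- lambdaMin ≤ 1
    have hsq_le_one : ∀ x : Fin d → ℝ, vecNorm x = 1 →
        x ⬝ᵥ Sigφ.mulVec x ≤ 1 := by
      intro x hx
      rw [keyS x x]
      have hint : Integrable (fun ω => (x ⬝ᵥ φ ω) * (x ⬝ᵥ φ ω)) Pr := by
        refine integrable_of_bdd ((hdotm x).mul (hdotm x)) (C := 1)
          ((hdotb x).mono fun ω hω => ?_)
        rw [hx] at hω
        rw [abs_mul]
        nlinarith [abs_nonneg (x ⬝ᵥ φ ω)]
      refine integral_le_of_ae_le hint ((hdotb x).mono fun ω hω => ?_)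
      rw [hx] at hω
      nlinarith [le_abs_self (x ⬝ᵥ φ ω), neg_abs_le (x ⬝ᵥ φ ω)]
    have hlmin1 : lambdaMin Sigφ ≤ 1 := by
      set e : Fin d → ℝ := Pi.single ⟨0, Nat.pos_of_ne_zero hd⟩ 1 with he
      have hee : vecNorm e = 1 := by
        unfold vecNorm
        rw [show (∑ i, e i ^ 2) = 1 by
          rw [he]
          simp [Pi.single_apply, Finset.sum_ite_eq']]
        exact Real.sqrt_one
      exact (hlmin_le e hee).trans (hsq_le_one e hee)
    have hRHS0 : 0 ≤ 1 - α * (1 - γ) * lambdaMin Sigφ := by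
      have h1 : α * (1 - γ) * lambdaMin Sigφ ≤ α * (1 - γ) * 1 := by
        refine mul_le_mul_of_nonneg_left hlmin1 ?_
        have : (0:ℝ) ≤ 1 - γ := by linarith
        positivity
      nlinarith [sq_nonneg (1 + γ)]
    -- main bound
    have hmain : ∀ x : Fin d → ℝ, vecNorm x = 1 →
        vecNorm ((1 - α • Abar).mulVec x) ≤ Real.sqrt (1 - α * (1 - γ) * lambdaMin Sigφ) := by
      intro x hx
      set s : ℝ := x ⬝ᵥ Sigφ.mulVec x with hs_def
      have hs0 : 0 ≤ s := hSel s ⟨x, hx, rfl⟩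
      have hsmin : lambdaMin Sigφ ≤ s := hlmin_le x hx
      have hxb : ∀ᵐ ω ∂Pr, |x ⬝ᵥ φ ω| ≤ 1 := (hdotb x).mono fun ω h => by rwa [hx] at h
      have hxb' : ∀ᵐ ω ∂Pr, |x ⬝ᵥ φ' ω| ≤ 1 := (hdot'b x).mono fun ω h => by rwa [hx] at h
      have hu2 : ∫ ω, (x ⬝ᵥ φ ω) ^ 2 ∂Pr = s := by
        rw [hs_def, keyS x x]
        simp_rw [sq]
      have hv2 : ∫ ω, (x ⬝ᵥ φ' ω) ^ 2 ∂Pr = s := (hsame' x).trans hu2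
      have hIu2 : Integrable (fun ω => (x ⬝ᵥ φ ω) ^ 2) Pr := by
        refine integrable_of_bdd ((hdotm x).pow_const 2) (C := 1) (hxb.mono fun ω h => ?_)
        rw [abs_pow]
        exact pow_le_one₀ (abs_nonneg _) h
      have hIv2 : Integrable (fun ω => (x ⬝ᵥ φ' ω) ^ 2) Pr := by
        refine integrable_of_bdd ((hdot'm x).pow_const 2) (C := 1) (hxb'.mono fun ω h => ?_)
        rw [abs_pow]
        exact pow_le_one₀ (abs_nonneg _) h
      have hIuv : Integrable (fun ω => (x ⬝ᵥ φ ω) * (x ⬝ᵥ φ' ω)) Pr := by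
        refine integrable_of_bdd ((hdotm x).mul (hdot'm x)) (C := 1)
          ((hxb.and hxb').mono fun ω hω => ?_)
        rw [abs_mul]
        exact mul_le_one₀ hω.1 (abs_nonneg _) hω.2
      have huv : |∫ ω, (x ⬝ᵥ φ ω) * (x ⬝ᵥ φ' ω) ∂Pr| ≤ s := by
        have := integral_CS (Pr := Pr) (hdotm x) (hdot'm x) hxb hxb'
        rw [hu2, hv2, Real.mul_self_sqrt hs0] at this
        exact this
      have huv1 : ∫ ω, (x ⬝ᵥ φ ω) * (x ⬝ᵥ φ' ω) ∂Pr ≤ s := (le_abs_self _).trans huv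
      have huv2 : -s ≤ ∫ ω, (x ⬝ᵥ φ ω) * (x ⬝ᵥ φ' ω) ∂Pr := neg_le_of_abs_le huv
      -- lower bound on x ⬝ᵥ Abar x
      have hp : (1 - γ) * s ≤ x ⬝ᵥ Abar.mulVec x := by
        rw [keyA x x]
        have hsplit : ∫ ω, (x ⬝ᵥ φ ω) * ((x ⬝ᵥ φ ω) - γ * (x ⬝ᵥ φ' ω)) ∂Pr
            = (∫ ω, (x ⬝ᵥ φ ω) ^ 2 ∂Pr) - γ * ∫ ω, (x ⬝ᵥ φ ω) * (x ⬝ᵥ φ' ω) ∂Pr := by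
          have hpt : ∀ ω, (x ⬝ᵥ φ ω) * ((x ⬝ᵥ φ ω) - γ * (x ⬝ᵥ φ' ω))
              = (x ⬝ᵥ φ ω) ^ 2 - γ * ((x ⬝ᵥ φ ω) * (x ⬝ᵥ φ' ω)) := fun ω => by ring
          simp_rw [hpt]
          have h4 : Integrable (fun ω => γ * ((x ⬝ᵥ φ ω) * (x ⬝ᵥ φ' ω))) Pr := hIuv.const_mul _
          rw [integral_sub hIu2 h4, integral_const_mul]
        rw [hsplit, hu2]
        nlinarith [hγ0.le]
      -- upper bound on ‖Abar x‖²
      have hg2 : ∫ ω, ((x ⬝ᵥ φ ω) - γ * (x ⬝ᵥ φ' ω)) ^ 2 ∂Pr ≤ (1 + γ) ^ 2 * s := by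
        have hpt : ∀ ω, ((x ⬝ᵥ φ ω) - γ * (x ⬝ᵥ φ' ω)) ^ 2
            = (x ⬝ᵥ φ ω) ^ 2 - 2 * γ * ((x ⬝ᵥ φ ω) * (x ⬝ᵥ φ' ω))
              + γ ^ 2 * (x ⬝ᵥ φ' ω) ^ 2 := fun ω => by ring
        simp_rw [hpt]
        have h1 : Integrable (fun ω => (x ⬝ᵥ φ ω) ^ 2
            - 2 * γ * ((x ⬝ᵥ φ ω) * (x ⬝ᵥ φ' ω))) Pr := hIu2.sub (hIuv.const_mul _)
        have h2 : Integrable (fun ω => γ ^ 2 * (x ⬝ᵥ φ' ω) ^ 2) Pr := hIv2.const_mul _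
        have h3 : Integrable (fun ω => 2 * γ * ((x ⬝ᵥ φ ω) * (x ⬝ᵥ φ' ω))) Pr :=
          hIuv.const_mul _
        rw [integral_add h1 h2, integral_sub hIu2 h3, integral_const_mul, integral_const_mul,
          hu2, hv2]
        nlinarith [hγ0.le]
      have hmN : vecNorm (Abar.mulVec x) ≤ (1 + γ) * Real.sqrt s := by
        refine vecNorm_le_of_dual (by positivity) fun y hy => ?_
        rw [keyA x y]
        have hyb : ∀ᵐ ω ∂Pr, |y ⬝ᵥ φ ω| ≤ 1 := (hdotb y).mono fun ω h => by rwa [hy] at h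
        have hgb : ∀ᵐ ω ∂Pr, |(x ⬝ᵥ φ ω) - γ * (x ⬝ᵥ φ' ω)| ≤ 1 + γ := by
          refine (hxb.and hxb').mono fun ω hω => ?_
          have h3 : |γ * (x ⬝ᵥ φ' ω)| ≤ γ := by
            rw [abs_mul, abs_of_nonneg hγ0.le]
            nlinarith [hω.2, abs_nonneg (x ⬝ᵥ φ' ω)]
          have h4 := abs_sub (x ⬝ᵥ φ ω) (γ * (x ⬝ᵥ φ' ω))
          nlinarith [hω.1]
        have hCS := integral_CS (Pr := Pr) (hdotm y)
          ((hdotm x).sub ((hdot'm x).const_mul γ)) hyb hgb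
        have hy2 : ∫ ω, (y ⬝ᵥ φ ω) ^ 2 ∂Pr ≤ 1 := by
          refine integral_le_of_ae_le ?_ (hyb.mono fun ω h => ?_)
          · refine integrable_of_bdd ((hdotm y).pow_const 2) (C := 1) (hyb.mono fun ω h => ?_)
            rw [abs_pow]
            exact pow_le_one₀ (abs_nonneg _) h
          · nlinarith [le_abs_self (y ⬝ᵥ φ ω), neg_abs_le (y ⬝ᵥ φ ω)]
        have hsq1 : Real.sqrt (∫ ω, (y ⬝ᵥ φ ω) ^ 2 ∂Pr) ≤ 1 := by
          rw [show (1:ℝ) = Real.sqrt 1 from Real.sqrt_one.symm]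
          exact Real.sqrt_le_sqrt hy2
        have hsq2 : Real.sqrt (∫ ω, ((x ⬝ᵥ φ ω) - γ * (x ⬝ᵥ φ' ω)) ^ 2 ∂Pr)
            ≤ (1 + γ) * Real.sqrt s := by
          refine (Real.sqrt_le_sqrt hg2).trans ?_
          rw [Real.sqrt_mul (by positivity) s, Real.sqrt_sq h1γ]
        calc ∫ ω, (y ⬝ᵥ φ ω) * ((x ⬝ᵥ φ ω) - γ * (x ⬝ᵥ φ' ω)) ∂Pr
            ≤ |∫ ω, (y ⬝ᵥ φ ω) * ((x ⬝ᵥ φ ω) - γ * (x ⬝ᵥ φ' ω)) ∂Pr| := le_abs_self _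
        _ ≤ Real.sqrt (∫ ω, (y ⬝ᵥ φ ω) ^ 2 ∂Pr)
            * Real.sqrt (∫ ω, ((x ⬝ᵥ φ ω) - γ * (x ⬝ᵥ φ' ω)) ^ 2 ∂Pr) := hCS
        _ ≤ 1 * ((1 + γ) * Real.sqrt s) :=
            mul_le_mul hsq1 hsq2 (Real.sqrt_nonneg _) zero_le_one
        _ = (1 + γ) * Real.sqrt s := one_mul _
      have hq : (Abar.mulVec x) ⬝ᵥ (Abar.mulVec x) ≤ (1 + γ) ^ 2 * s := by
        rw [← vecNorm_sq']
        calc vecNorm (Abar.mulVec x) ^ 2 ≤ ((1 + γ) * Real.sqrt s) ^ 2 :=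
          pow_le_pow_left₀ (vecNorm_nonneg _) hmN 2
        _ = (1 + γ) ^ 2 * s := by rw [mul_pow, Real.sq_sqrt hs0]
      -- put it together
      have hw : (1 - α • Abar).mulVec x = x - α • (Abar.mulVec x) := by
        rw [Matrix.sub_mulVec, Matrix.one_mulVec, Matrix.smul_mulVec]
      have hxx : x ⬝ᵥ x = 1 := by
        rw [← vecNorm_sq', hx, one_pow]
      have hdot : (x - α • (Abar.mulVec x)) ⬝ᵥ (x - α • (Abar.mulVec x))
          = 1 - 2 * α * (x ⬝ᵥ Abar.mulVec x)
            + α ^ 2 * ((Abar.mulVec x) ⬝ᵥ (Abar.mulVec x)) := by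
        have hcomm : (Abar.mulVec x) ⬝ᵥ x = x ⬝ᵥ (Abar.mulVec x) := dotProduct_comm _ _
        simp only [dotProduct_sub, sub_dotProduct, dotProduct_smul, smul_dotProduct,
          smul_eq_mul]
        rw [hxx, hcomm]
        ring
      rw [hw, vecNorm_eq_sqrt_dot]
      refine Real.sqrt_le_sqrt ?_
      rw [hdot]
      nlinarith [mul_le_mul_of_nonneg_left hp hα0, mul_le_mul_of_nonneg_left hq (sq_nonneg α),
        mul_le_mul_of_nonneg_right hα2 (mul_nonneg hα0 hs0),
        mul_le_mul_of_nonneg_left hsmin (mul_nonneg hα0 (show (0:ℝ) ≤ 1 - γ by linarith))]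
    have hle : matOpNorm (1 - α • Abar) ≤ Real.sqrt (1 - α * (1 - γ) * lambdaMin Sigφ) :=
      matOpNorm_le (Real.sqrt_nonneg _) hmain
    calc matOpNorm (1 - α • Abar) ^ 2
        ≤ Real.sqrt (1 - α * (1 - γ) * lambdaMin Sigφ) ^ 2 :=
          pow_le_pow_left₀ (matOpNorm_nonneg _) hle 2
    _ = 1 - α * (1 - γ) * lambdaMin Sigφ := Real.sq_sqrt hRHS0


end
end

section
/- The following deterministic identity holds: for every k ≥ n, θ_k^b − θ_k = − Σ_{ℓ=n+1}^{k} α_ℓ (w_ℓ − 1) Γ^b_{ℓ+1:k} ε̃_ℓ, where ε̃_ℓ = A_ℓ(θ_{ℓ−1} − θ*) + ε_ℓ and Γ^b_{m:k} = ∏_{i=m}^{k}(I − α_i w_i A_i). -/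
open MeasureTheory ProbabilityTheory Matrix Finset

noncomputable section

lemma matProd_succ {d : ℕ} (m k : ℕ) (h : m ≤ k + 1) (F : ℕ → Matrix (Fin d) (Fin d) ℝ) :
    matProd m (k+1) F = F (k+1) * matProd m k F := by
  unfold matProd
  have h1 : k + 1 + 1 - m = (k + 1 - m) + 1 := by omega
  rw [h1, List.range'_concat]
  have h2 : m + (k + 1 - m) = k + 1 := by omega
  simp [h2]

lemma matProd_empty {d : ℕ} (k : ℕ) (F : ℕ → Matrix (Fin d) (Fin d) ℝ) :
    matProd (k+2) (k+1) F = 1 := by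
  have : k + 1 + 1 - (k + 2) = 0 := by omega
  simp [matProd, this]


/-- Lemma: expansion of the bootstrap-vs-original difference.
With the LSA iterates `θ_k` and the multiplier-bootstrap iterates `θ_k^b` (started from
`θ_n^b = θ_n`), for every `k ≥ n`,
`θ_k^b − θ_k = −Σ_{ℓ=n+1}^k α_ℓ(w_ℓ − 1)Γ^b_{ℓ+1:k} ε̃_ℓ`, where
`ε̃_ℓ = A_ℓ(θ_{ℓ−1} − θ*) + ε_ℓ` and `Γ^b_{m:k} = ∏_{i=m}^k (I − α_i w_i A_i)`. -/
theorem stmt_18 {d : ℕ} (n : ℕ)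
    (A : ℕ → Matrix (Fin d) (Fin d) ℝ) (b : ℕ → Fin d → ℝ)
    (α w : ℕ → ℝ)
    (Abar : Matrix (Fin d) (Fin d) ℝ) (bbar θstar : Fin d → ℝ)
    (hsol : Abar.mulVec θstar = bbar)
    (eps : ℕ → Fin d → ℝ)
    (heps : ∀ k, eps k = (A k - Abar).mulVec θstar - (b k - bbar))
    (θ0 : Fin d → ℝ) (θ θb : ℕ → Fin d → ℝ)
    (hθ0 : θ 0 = θ0)
    (hθrec : ∀ k : ℕ, θ (k + 1) = θ k - α (k + 1) • ((A (k + 1)).mulVec (θ k) - b (k + 1)))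
    (hθbinit : θb n = θ n)
    (hθbrec : ∀ k, n ≤ k → θb (k + 1) =
      θb k - (α (k + 1) * w (k + 1)) • ((A (k + 1)).mulVec (θb k) - b (k + 1))) :
    ∀ k, n ≤ k →
      θb k - θ k
        = - ∑ ℓ ∈ Finset.Icc (n + 1) k,
            (α ℓ * (w ℓ - 1)) •
              (matProd (ℓ + 1) k fun i => 1 - (α i * w i) • A i).mulVec
                ((A ℓ).mulVec (θ (ℓ - 1) - θstar) + eps ℓ) := by
  intro k hk
  induction k, hk using Nat.le_induction with
  | base =>
    rw [hθbinit, Finset.Icc_eq_empty (by omega)]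
    simp
  | succ k hk ih =>
    set F : ℕ → Matrix (Fin d) (Fin d) ℝ := fun i => 1 - (α i * w i) • A i with hF
    set v : ℕ → Fin d → ℝ := fun ℓ => (A ℓ).mulVec (θ (ℓ - 1) - θstar) + eps ℓ with hv
    have key : θb (k+1) - θ (k+1)
        = (F (k+1)).mulVec (θb k - θ k)
          - (α (k+1) * (w (k+1) - 1)) • v (k+1) := by
      rw [hθbrec k hk, hθrec k, hv]
      simp only [heps, hF, Nat.add_sub_cancel]
      rw [Matrix.sub_mulVec, ← hsol]
      simp only [Matrix.sub_mulVec, Matrix.one_mulVec, Matrix.smul_mulVec,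
        Matrix.mulVec_sub]
      module
    rw [key, ih]
    rw [Finset.sum_Icc_succ_top (by omega : n + 1 ≤ k + 1)]
    have hstep : ∀ ℓ ∈ Finset.Icc (n+1) k,
        (α ℓ * (w ℓ - 1)) • (matProd (ℓ + 1) (k+1) F).mulVec (v ℓ)
          = (F (k+1)).mulVec ((α ℓ * (w ℓ - 1)) • (matProd (ℓ + 1) k F).mulVec (v ℓ)) := by
      intro ℓ hℓ
      have hℓk : ℓ + 1 ≤ k + 1 := by
        have := (Finset.mem_Icc.mp hℓ).2; omega
      rw [matProd_succ _ _ hℓk, ← Matrix.mulVec_mulVec, Matrix.mulVec_smul]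
    rw [Finset.sum_congr rfl hstep, matProd_empty, Matrix.one_mulVec, Nat.add_sub_cancel]
    have hlin : ∑ ℓ ∈ Finset.Icc (n+1) k,
        (F (k+1)).mulVec ((α ℓ * (w ℓ - 1)) • (matProd (ℓ + 1) k F).mulVec (v ℓ))
        = (F (k+1)).mulVec (∑ ℓ ∈ Finset.Icc (n+1) k,
            (α ℓ * (w ℓ - 1)) • (matProd (ℓ + 1) k F).mulVec (v ℓ)) := by
      simp only [← Matrix.mulVecLin_apply]
      exact (map_sum _ _ _).symm
    rw [hlin, neg_add, ← Matrix.mulVec_neg]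
    simp only [hv, Nat.add_sub_cancel, sub_eq_add_neg]

end
end

section
/- The following deterministic identity holds: √n · Ā(θ̄_n^b − θ̄_n) = −W^b + D₁^b − D₂^b − D₃^b + D₄^b − D₅^b, where W^b = n^{−1/2} Σ_{k=n+1}^{2n} (w_k − 1) ε_k, D₁^b = n^{−1/2}(θ_n^b − θ_n)/α_n, D₂^b = n^{−1/2}(θ_{2n}^b − θ_{2n})/α_{2n}, D₃^b = n^{−1/2} Σ_{k=n+1}^{2n} (w_k − 1) A_k (θ_{k−1}^b − θ*), D₄^b = n^{−1/2} Σ_{k=n+1}^{2n} (θ_{k−1}^b − θ_{k−1})(1/α_k − 1/α_{k−1}), and D₅^b = n^{−1/2} Σ_{k=n+1}^{2n} (A_k − Ā)(θ_{k−1}^b − θ_{k−1}). -/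
open MeasureTheory ProbabilityTheory Matrix Finset

noncomputable section

/-- telescoping sum in a module -/
private lemma telesum {M : Type*} [AddCommGroup M] (g : ℕ → M) (m p : ℕ) :
    ∑ k ∈ Finset.Ico m (m + p), (g k - g (k + 1)) = g m - g (m + p) := by
  rw [Finset.sum_Ico_eq_sum_range]
  simp only [Nat.add_sub_cancel_left]
  induction p with
  | zero => simp
  | succ p ih => rw [Finset.sum_range_succ, ih]; abel

private lemma shiftsum {M : Type*} [AddCommMonoid M] (n : ℕ) (f : ℕ → M) :
    ∑ k ∈ Finset.Icc (n + 1) (2 * n), f k = ∑ k ∈ Finset.Ico n (2 * n), f (k + 1) := by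
  rw [← Finset.Ico_add_one_right_eq_Icc, Finset.sum_Ico_eq_sum_range, Finset.sum_Ico_eq_sum_range]
  have h1 : 2 * n + 1 - (n + 1) = n := by omega
  have h2 : 2 * n - n = n := by omega
  rw [h1, h2]
  exact Finset.sum_congr rfl fun k _ => by rw [Nat.add_right_comm]

/-- decomposition of the bootstrap Polyak–Ruppert error.
With the LSA iterates `θ_k` and the multiplier-bootstrap iterates `θ_k^b`
(`θ_n^b = θ_n`), the deterministic identity
`√n·Ā(θ̄_n^b − θ̄_n) = −W^b + D₁^b − D₂^b − D₃^b + D₄^b − D₅^b` holds, with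
`W^b = n^{−1/2}Σ(w_k−1)ε_k`, `D₁^b = n^{−1/2}(θ_n^b−θ_n)/α_n`,
`D₂^b = n^{−1/2}(θ_{2n}^b−θ_{2n})/α_{2n}`,
`D₃^b = n^{−1/2}Σ(w_k−1)A_k(θ_{k−1}^b−θ*)`,
`D₄^b = n^{−1/2}Σ(θ_{k−1}^b−θ_{k−1})(1/α_k−1/α_{k−1})`,
`D₅^b = n^{−1/2}Σ(A_k−Ā)(θ_{k−1}^b−θ_{k−1})`, sums over `k = n+1,…,2n`. -/
theorem stmt_19 {d n : ℕ} (hd : 0 < d) (hn : 0 < n)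
    (A : ℕ → Matrix (Fin d) (Fin d) ℝ) (b : ℕ → Fin d → ℝ)
    (α : ℕ → ℝ) (hα : ∀ k, 0 < α k) (w : ℕ → ℝ)
    (Abar : Matrix (Fin d) (Fin d) ℝ) (bbar θstar : Fin d → ℝ)
    (hsol : Abar.mulVec θstar = bbar)
    (eps : ℕ → Fin d → ℝ)
    (heps : ∀ k, eps k = (A k - Abar).mulVec θstar - (b k - bbar))
    (θ0 : Fin d → ℝ) (θ θb : ℕ → Fin d → ℝ)
    (hθ0 : θ 0 = θ0)
    (hθrec : ∀ k : ℕ, θ (k + 1) = θ k - α (k + 1) • ((A (k + 1)).mulVec (θ k) - b (k + 1)))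
    (hθbinit : θb n = θ n)
    (hθbrec : ∀ k, n ≤ k → θb (k + 1) =
      θb k - (α (k + 1) * w (k + 1)) • ((A (k + 1)).mulVec (θb k) - b (k + 1))) :
    Real.sqrt n • Abar.mulVec
        (((n : ℝ)⁻¹ • ∑ k ∈ Finset.Ico n (2 * n), θb k)
          - ((n : ℝ)⁻¹ • ∑ k ∈ Finset.Ico n (2 * n), θ k))
      = - ((Real.sqrt n)⁻¹ • ∑ k ∈ Finset.Icc (n + 1) (2 * n), (w k - 1) • eps k)
        + (Real.sqrt n)⁻¹ • (α n)⁻¹ • (θb n - θ n)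
        - (Real.sqrt n)⁻¹ • (α (2 * n))⁻¹ • (θb (2 * n) - θ (2 * n))
        - (Real.sqrt n)⁻¹ • ∑ k ∈ Finset.Icc (n + 1) (2 * n),
            (w k - 1) • (A k).mulVec (θb (k - 1) - θstar)
        + (Real.sqrt n)⁻¹ • ∑ k ∈ Finset.Icc (n + 1) (2 * n),
            ((α k)⁻¹ - (α (k - 1))⁻¹) • (θb (k - 1) - θ (k - 1))
        - (Real.sqrt n)⁻¹ • ∑ k ∈ Finset.Icc (n + 1) (2 * n),
            (A k - Abar).mulVec (θb (k - 1) - θ (k - 1)) := by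
  -- per-step recurrence for δ k = θb k - θ k
  have step : ∀ k, n ≤ k →
      (θb k - θ k) - (θb (k + 1) - θ (k + 1)) =
        α (k + 1) • (Abar.mulVec (θb k - θ k) + (w (k + 1) - 1) • eps (k + 1)
          + (w (k + 1) - 1) • (A (k + 1)).mulVec (θb k - θstar)
          + (A (k + 1) - Abar).mulVec (θb k - θ k)) := by
    intro k hk
    rw [hθrec k, hθbrec k hk, heps (k + 1)]
    simp only [Matrix.mulVec_sub, Matrix.sub_mulVec, Matrix.mulVec_smul, hsol]
    module
  -- per-step key identity
  have key : ∀ k, n ≤ k →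
      Abar.mulVec (θb k - θ k) =
        ((α k)⁻¹ • (θb k - θ k) - (α (k + 1))⁻¹ • (θb (k + 1) - θ (k + 1)))
        - (w (k + 1) - 1) • eps (k + 1)
        - (w (k + 1) - 1) • (A (k + 1)).mulVec (θb k - θstar)
        + ((α (k + 1))⁻¹ - (α k)⁻¹) • (θb k - θ k)
        - (A (k + 1) - Abar).mulVec (θb k - θ k) := by
    intro k hk
    have h2 : (α (k + 1))⁻¹ • ((θb k - θ k) - (θb (k + 1) - θ (k + 1))) =
        Abar.mulVec (θb k - θ k) + (w (k + 1) - 1) • eps (k + 1)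
          + (w (k + 1) - 1) • (A (k + 1)).mulVec (θb k - θstar)
          + (A (k + 1) - Abar).mulVec (θb k - θ k) := by
      rw [step k hk, inv_smul_smul₀ (hα (k + 1)).ne']
    have h3 : Abar.mulVec (θb k - θ k) =
        (α (k + 1))⁻¹ • ((θb k - θ k) - (θb (k + 1) - θ (k + 1)))
        - (w (k + 1) - 1) • eps (k + 1)
        - (w (k + 1) - 1) • (A (k + 1)).mulVec (θb k - θstar)
        - (A (k + 1) - Abar).mulVec (θb k - θ k) := by
      rw [h2]; abel
    rw [h3]; module
  -- summed identity
  have hS : ∑ k ∈ Finset.Ico n (2 * n), Abar.mulVec (θb k - θ k) =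
      ((α n)⁻¹ • (θb n - θ n) - (α (2 * n))⁻¹ • (θb (2 * n) - θ (2 * n)))
      - ∑ k ∈ Finset.Ico n (2 * n), (w (k + 1) - 1) • eps (k + 1)
      - ∑ k ∈ Finset.Ico n (2 * n), (w (k + 1) - 1) • (A (k + 1)).mulVec (θb k - θstar)
      + ∑ k ∈ Finset.Ico n (2 * n), ((α (k + 1))⁻¹ - (α k)⁻¹) • (θb k - θ k)
      - ∑ k ∈ Finset.Ico n (2 * n), (A (k + 1) - Abar).mulVec (θb k - θ k) := by
    rw [Finset.sum_congr rfl fun k hk => key k (Finset.mem_Ico.mp hk).1]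
    have h2n : 2 * n = n + n := by omega
    have htel : (∑ k ∈ Finset.Ico n (2 * n), (α k)⁻¹ • (θb k - θ k))
        - ∑ k ∈ Finset.Ico n (2 * n), (α (k + 1))⁻¹ • (θb (k + 1) - θ (k + 1))
        = (α n)⁻¹ • (θb n - θ n) - (α (2 * n))⁻¹ • (θb (2 * n) - θ (2 * n)) := by
      rw [← Finset.sum_sub_distrib, h2n, telesum (fun k => (α k)⁻¹ • (θb k - θ k)) n n]
    simp only [Finset.sum_sub_distrib, Finset.sum_add_distrib]
    rw [htel]
  -- rewrite Icc sums as shifted Ico sums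
  rw [shiftsum n (fun k => (w k - 1) • eps k),
    shiftsum n (fun k => (w k - 1) • (A k).mulVec (θb (k - 1) - θstar)),
    shiftsum n (fun k => ((α k)⁻¹ - (α (k - 1))⁻¹) • (θb (k - 1) - θ (k - 1))),
    shiftsum n (fun k => (A k - Abar).mulVec (θb (k - 1) - θ (k - 1)))]
  simp only [Nat.add_sub_cancel]
  -- reduce LHS
  have hs : (Real.sqrt n) ≠ 0 := by
    have : (0:ℝ) < n := by exact_mod_cast hn
    positivity
  have hc : Real.sqrt n * (n : ℝ)⁻¹ = (Real.sqrt n)⁻¹ := by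
    field_simp
    exact Real.sq_sqrt (Nat.cast_nonneg _)
  rw [← smul_sub, ← Finset.sum_sub_distrib, Matrix.mulVec_smul, smul_smul, hc]
  have hmv : Abar.mulVec (∑ k ∈ Finset.Ico n (2 * n), (θb k - θ k)) =
      ∑ k ∈ Finset.Ico n (2 * n), Abar.mulVec (θb k - θ k) := by
    exact map_sum (Matrix.mulVecLin Abar) _ _
  rw [hmv, hS]
  simp only [smul_sub, smul_add, smul_neg]
  abel


end
end
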